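/- (Deterministic core of Lemma 3.1) Let p₁,…,p_s ∈ [0,1] with order statistics p₍₁₎ ≤ ⋯ ≤ p₍ₛ₎, let I ⊆ {1,…,s} with |I| ≥ k, and let q₍₁₎ ≤ ⋯ ≤ q₍|I|₎ be the ordered values of (pᵢ)_{i∈I}. Let α₁ ≤ ⋯ ≤ α_s. If the stepup procedure (rejecting the r smallest p-values where r is the largest index with p₍ᵣ₎ ≤ α_r) rejects at least k indices belonging to I, then there exists j with k ≤ j ≤ |I| such that q₍ⱼ₎ ≤ α_{s-|I|+j}. -/

import Mathlib

open MeasureTheory Finset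
open scoped Classical

/-- `orderStat p k` is the `k`-th smallest value (1-indexed) among `p 0, …, p (n-1)`. -/
noncomputable def orderStat {n : ℕ} (p : Fin n → ℝ) (k : ℕ) : ℝ :=
  if h : k - 1 < n then p (Tuple.sort p ⟨k - 1, h⟩) else 0

/-- The number of rejections of the stepup procedure with critical values
`c 1 ≤ … ≤ c n` (1-indexed): the largest `j` with `p_(j) ≤ c j` (0 if none). -/
noncomputable def numReject {n : ℕ} (c : ℕ → ℝ) (p : Fin n → ℝ) : ℕ :=
  ((Finset.Icc 1 n).filter (fun j => orderStat p j ≤ c j)).sup id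

/-- The indices rejected by the stepup procedure: those carrying the
`numReject c p` smallest p-values (via the sorting permutation). -/
noncomputable def rejectedSet {n : ℕ} (c : ℕ → ℝ) (p : Fin n → ℝ) : Finset (Fin n) :=
  (Finset.univ.filter (fun j : Fin n => (j : ℕ) + 1 ≤ numReject c p)).image (Tuple.sort p)

/-- The `k`-th smallest (1-indexed) of the p-values with indices in `I`. -/
noncomputable def trueOrderStat {n : ℕ} (I : Finset (Fin n)) (p : Fin n → ℝ) (k : ℕ) : ℝ :=
  orderStat (fun j : Fin I.card => p (I.orderIsoOfFin rfl j).1) k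

lemma card_filter_lt_fin {n a : ℕ} (h : a ≤ n) :
    (Finset.univ.filter (fun j : Fin n => (j : ℕ) < a)).card = a := by
  refine Eq.trans ?_ (Finset.card_range a)
  refine Finset.card_bij (fun (j : Fin n) _ => (j : ℕ)) ?_ ?_ ?_
  · intro j hj; simp at hj ⊢; exact hj
  · intro j hj j' hj' e; exact Fin.val_injective e
  · intro m hm; simp at hm
    exact ⟨⟨m, lt_of_lt_of_le hm h⟩, by simpa using hm, rfl⟩

lemma orderStat_le {n : ℕ} (f : Fin n → ℝ) (m : ℕ) (hm : 1 ≤ m) (t : ℝ)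
    (h : m ≤ (Finset.univ.filter (fun j => f j ≤ t)).card) : orderStat f m ≤ t := by
  have hmn : m ≤ n := by
    have := Finset.card_le_univ (Finset.univ.filter (fun j : Fin n => f j ≤ t))
    simp at this; omega
  have hlt : m - 1 < n := by omega
  rw [orderStat, dif_pos hlt]
  by_contra hgt
  push_neg at hgt
  have hmono := Tuple.monotone_sort f
  have key : ∀ j : Fin n, f j ≤ t → ((Tuple.sort f).symm j : ℕ) < m - 1 := by
    intro j hj
    by_contra hge
    push_neg at hge
    have : f (Tuple.sort f ⟨m - 1, hlt⟩) ≤ f (Tuple.sort f ((Tuple.sort f).symm j)) :=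
      hmono hge
    rw [Equiv.apply_symm_apply] at this
    exact absurd (this.trans hj) (not_le.mpr hgt)
  have hcard : (Finset.univ.filter (fun j : Fin n => f j ≤ t)).card ≤ m - 1 := by
    have heq : (Finset.univ.filter (fun j : Fin n => f j ≤ t)).card =
        (Finset.univ.filter (fun j : Fin n => f (Tuple.sort f j) ≤ t)).card := by
      apply Finset.card_bij (fun j _ => (Tuple.sort f).symm j)
      · intro j hj; simp at hj ⊢; simpa using hj
      · intro j _ j' _ e; exact (Tuple.sort f).symm.injective e
      · intro j hj; simp at hj; exact ⟨Tuple.sort f j, by simpa using hj, by simp⟩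
    rw [heq]
    calc (Finset.univ.filter (fun j : Fin n => f (Tuple.sort f j) ≤ t)).card
        ≤ (Finset.univ.filter (fun j : Fin n => (j : ℕ) < m - 1)).card := by
          apply Finset.card_le_card
          intro j hj
          simp at hj ⊢
          have := key (Tuple.sort f j) hj
          simpa using this
      _ = m - 1 := card_filter_lt_fin (by omega)
  omega

/-- Deterministic core of Lemma 3.1: if the stepup procedure rejects at least
`k` indices belonging to `I`, then `q_(j) ≤ α_{s-|I|+j}` for some `k ≤ j ≤ |I|`. -/
theorem stmt7 {s : ℕ} (p : Fin s → ℝ) (hval : ∀ i, p i ∈ Set.Icc (0 : ℝ) 1)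
    (I : Finset (Fin s)) (k : ℕ) (hk1 : 1 ≤ k) (hkI : k ≤ I.card)
    (c : ℕ → ℝ) (hc : ∀ i j, 1 ≤ i → i ≤ j → j ≤ s → c i ≤ c j)
    (hrej : k ≤ (rejectedSet c p ∩ I).card) :
    ∃ j, k ≤ j ∧ j ≤ I.card ∧ trueOrderStat I p j ≤ c (s - I.card + j) := by
  set r := numReject c p with hr
  set m := (rejectedSet c p ∩ I).card with hm
  have hmI : m ≤ I.card := Finset.card_le_card (Finset.inter_subset_right)
  have hrs : r ≤ s := by
    apply Finset.sup_le
    intro j hj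
    simp at hj
    exact hj.1.2
  have hRcard : (rejectedSet c p).card = r := by
    rw [rejectedSet, Finset.card_image_of_injective _ (Tuple.sort p).injective]
    have heq2 : (Finset.univ.filter (fun j : Fin s => (j : ℕ) + 1 ≤ r)) =
        (Finset.univ.filter (fun j : Fin s => (j : ℕ) < r)) := by
      apply Finset.filter_congr; intro j _; constructor <;> intro h <;> omega
    rw [heq2, card_filter_lt_fin hrs]
  have hmr : m ≤ r := hRcard ▸ Finset.card_le_card Finset.inter_subset_left
  have hr1 : 1 ≤ r := le_trans hk1 (hrej.trans hmr)
  have hrmem : orderStat p r ≤ c r := by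
    have hne : (((Finset.Icc 1 s).filter (fun j => orderStat p j ≤ c j))).Nonempty := by
      by_contra hemp
      rw [Finset.not_nonempty_iff_eq_empty] at hemp
      have : r = 0 := by rw [hr, numReject, hemp]; simp
      omega
    have hmem := Finset.max'_mem _ hne
    have heq : (((Finset.Icc 1 s).filter (fun j => orderStat p j ≤ c j))).max' hne = r := by
      rw [hr, numReject, ← Finset.sup'_eq_sup hne id, Finset.max'_eq_sup']
    rw [heq] at hmem
    exact (Finset.mem_filter.mp hmem).2
  have hrle : r ≤ s - I.card + m := by
    have h1 : (rejectedSet c p \ I).card ≤ s - I.card := by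
      have hsub : (rejectedSet c p \ I) ⊆ Iᶜ := by
        intro x hx; simp at hx ⊢; exact hx.2
      have := Finset.card_le_card hsub
      rwa [Finset.card_compl, Fintype.card_fin] at this
    have h2 : (rejectedSet c p \ I).card + m = r := by
      rw [hm, Finset.card_sdiff_add_card_inter, hRcard]
    omega
  have hval_le : ∀ i ∈ rejectedSet c p, p i ≤ orderStat p r := by
    intro i hi
    rw [rejectedSet, Finset.mem_image] at hi
    obtain ⟨j, hj, rfl⟩ := hi
    simp at hj
    rw [orderStat, dif_pos (by omega : r - 1 < s)]
    exact Tuple.monotone_sort p (by rw [Fin.le_def]; simp; omega : j ≤ (⟨r - 1, by omega⟩ : Fin s))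
  refine ⟨m, hrej, hmI, ?_⟩
  have hcount : m ≤ (I.filter (fun i => p i ≤ orderStat p r)).card := by
    rw [hm]
    apply Finset.card_le_card
    intro x hx
    rw [Finset.mem_inter] at hx
    rw [Finset.mem_filter]
    exact ⟨hx.2, hval_le x hx.1⟩
  have heqc : (Finset.univ.filter
      (fun j : Fin I.card => p (I.orderIsoOfFin rfl j).1 ≤ orderStat p r)).card =
      (I.filter (fun i => p i ≤ orderStat p r)).card := by
    apply Finset.card_bij (fun j _ => ((I.orderIsoOfFin rfl j) : Fin s))
    · intro j hj
      simp only [Finset.mem_filter, Finset.mem_univ, true_and] at hj ⊢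
      exact ⟨(I.orderIsoOfFin rfl j).2, hj⟩
    · intro j _ j' _ e
      exact (I.orderIsoOfFin rfl).injective (Subtype.ext e)
    · intro i hi
      rw [Finset.mem_filter] at hi
      refine ⟨(I.orderIsoOfFin rfl).symm ⟨i, hi.1⟩, ?_, ?_⟩
      · simp only [Finset.mem_filter, Finset.mem_univ, true_and,
          OrderIso.apply_symm_apply]
        exact hi.2
      · simp
  have step1 : trueOrderStat I p m ≤ orderStat p r := by
    apply orderStat_le _ m (le_trans hk1 hrej)
    rw [heqc]
    exact hcount
  have step2 : c r ≤ c (s - I.card + m) := hc r _ hr1 hrle (by omega)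
  exact step1.trans (hrmem.trans step2)
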